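/- Let A = diag(3,3,6,6), j_A = (1/3, 1/3, 1/6, 1/6), and let G₁ be the subgroup of (ℚ/ℤ)⁴ generated by j_A and g₁ = (2/3, 1/3, 0, 0), and G₂ the subgroup generated by j_A and g₂ = (1/3, 1/3, 1/3, 0). Then (noting Aᵀ = A) the dual groups satisfy G₁^T = G₂ and G₂^T = G₁. -/

import Mathlib

open scoped BigOperators
open Matrix

noncomputable section

abbrev QZ : Type := AddCircle (1 : ℚ)

def qz : ℚ →+ QZ := QuotientAddGroup.mk' _

def GA {n : ℕ} (A : Matrix (Fin n) (Fin n) ℤ) : AddSubgroup (Fin n → QZ) where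
  carrier := {g | ∀ i, ∑ j, A i j • g j = 0}
  zero_mem' := by intro i; simp
  add_mem' := by
    intro a b ha hb i
    simp only [Pi.add_apply, smul_add, Finset.sum_add_distrib, ha i, hb i, add_zero]
  neg_mem' := by
    intro a ha i
    simp only [Pi.neg_apply, smul_neg, Finset.sum_neg_distrib, ha i, neg_zero]

def SLA {n : ℕ} (A : Matrix (Fin n) (Fin n) ℤ) : AddSubgroup (Fin n → QZ) where
  carrier := {g | g ∈ GA A ∧ ∑ i, g i = 0}
  zero_mem' := ⟨(GA A).zero_mem, by simp⟩
  add_mem' := by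
    intro a b ha hb
    exact ⟨(GA A).add_mem ha.1 hb.1, by simp [Pi.add_apply, Finset.sum_add_distrib, ha.2, hb.2]⟩
  neg_mem' := by
    intro a ha
    exact ⟨(GA A).neg_mem ha.1, by simp [Pi.neg_apply, Finset.sum_neg_distrib, ha.2]⟩

def jA {n : ℕ} (A : Matrix (Fin n) (Fin n) ℤ) : Fin n → QZ :=
  fun i => qz (((A.map (Int.cast : ℤ → ℚ))⁻¹).mulVec 1 i)

/-- `v : ℚ^n` is a lift of `g : (ℚ/ℤ)^n`. -/
def IsLift {n : ℕ} (v : Fin n → ℚ) (g : Fin n → QZ) : Prop := ∀ i, qz (v i) = g i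

lemma qz_eq_zero_iff (q : ℚ) : qz q = 0 ↔ ∃ m : ℤ, (m : ℚ) = q := by
  constructor
  · intro h
    have : q ∈ AddSubgroup.zmultiples (1 : ℚ) := by
      rwa [qz, QuotientAddGroup.mk'_apply, QuotientAddGroup.eq_zero_iff] at h
    obtain ⟨k, hk⟩ := this
    exact ⟨k, by simpa using hk⟩
  · rintro ⟨m, rfl⟩
    rw [qz, QuotientAddGroup.mk'_apply, QuotientAddGroup.eq_zero_iff]
    exact ⟨m, by simp⟩

lemma exists_lift {n : ℕ} (g : Fin n → QZ) : ∃ v : Fin n → ℚ, IsLift v g := by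
  choose v hv using fun i => QuotientAddGroup.mk'_surjective _ (g i)
  exact ⟨v, hv⟩

lemma row_int {n : ℕ} {A : Matrix (Fin n) (Fin n) ℤ} {h : Fin n → QZ} (hh : h ∈ GA A)
    {vh : Fin n → ℚ} (hl : IsLift vh h) (i : Fin n) :
    ∃ m : ℤ, (m : ℚ) = ∑ j, (A i j : ℚ) * vh j := by
  have h0 : qz (∑ j, (A i j : ℚ) * vh j) = 0 := by
    have := hh i
    calc qz (∑ j, (A i j : ℚ) * vh j) = ∑ j, A i j • qz (vh j) := by
          rw [map_sum]
          refine Finset.sum_congr rfl fun j _ => ?_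
          rw [← map_zsmul qz, zsmul_eq_mul]
      _ = ∑ j, A i j • h j := by
          refine Finset.sum_congr rfl fun j _ => by rw [hl j]
      _ = 0 := hh i
  exact (qz_eq_zero_iff _).1 h0

/-- The Berglund–Hübsch dual `H^T` of a subgroup `H ≤ G_A`: all `g ∈ G_{Aᵀ}` such that
for every `h ∈ H` and all lifts `ĝ, ĥ ∈ ℚ^n` of `g, h`, the number `∑ᵢⱼ ĝᵢ Aᵢⱼ ĥⱼ` is an
integer. -/
def dual {n : ℕ} (A : Matrix (Fin n) (Fin n) ℤ) (H : AddSubgroup (Fin n → QZ))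
    (hH : H ≤ GA A) : AddSubgroup (Fin n → QZ) where
  carrier := {g | g ∈ GA Aᵀ ∧ ∀ h ∈ H, ∀ vg vh : Fin n → ℚ, IsLift vg g → IsLift vh h →
    ∃ m : ℤ, (m : ℚ) = ∑ i, ∑ j, vg i * (A i j : ℚ) * vh j}
  zero_mem' := by
    refine ⟨(GA Aᵀ).zero_mem, ?_⟩
    intro h hh vg vh lg lh
    have hg : ∀ i, ∃ m : ℤ, (m : ℚ) = vg i := by
      intro i
      exact (qz_eq_zero_iff _).1 ((lg i).trans rfl)
    choose mg hmg using hg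
    choose c hc using fun i => row_int (hH hh) lh i
    refine ⟨∑ i, mg i * c i, ?_⟩
    push_cast
    calc (∑ i, (mg i : ℚ) * (c i : ℚ))
        = ∑ i, vg i * ∑ j, (A i j : ℚ) * vh j := by
          refine Finset.sum_congr rfl fun i _ => by rw [hmg i, hc i]
      _ = ∑ i, ∑ j, vg i * (A i j : ℚ) * vh j := by
          refine Finset.sum_congr rfl fun i _ => ?_
          rw [Finset.mul_sum]
          exact Finset.sum_congr rfl fun j _ => (mul_assoc _ _ _).symm
  add_mem' := by
    intro a b ha hb
    refine ⟨(GA Aᵀ).add_mem ha.1 hb.1, ?_⟩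
    intro h hh vg vh lg lh
    obtain ⟨va, hva⟩ := exists_lift a
    have hvb : IsLift (vg - va) b := by
      intro i
      have : qz (vg i - va i) = qz (vg i) - qz (va i) := map_sub qz _ _
      rw [Pi.sub_apply, this, lg i, hva i, Pi.add_apply, add_sub_cancel_left]
    obtain ⟨m₁, e₁⟩ := ha.2 h hh va vh hva lh
    obtain ⟨m₂, e₂⟩ := hb.2 h hh (vg - va) vh hvb lh
    refine ⟨m₁ + m₂, ?_⟩
    push_cast
    rw [e₁, e₂, ← Finset.sum_add_distrib]
    refine Finset.sum_congr rfl fun i _ => ?_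
    rw [← Finset.sum_add_distrib]
    refine Finset.sum_congr rfl fun j _ => ?_
    simp only [Pi.sub_apply]
    ring
  neg_mem' := by
    intro a ha
    refine ⟨(GA Aᵀ).neg_mem ha.1, ?_⟩
    intro h hh vg vh lg lh
    have hvg : IsLift (-vg) a := by
      intro i
      have : qz (-(vg i)) = - qz (vg i) := map_neg qz _
      rw [Pi.neg_apply, this, lg i, Pi.neg_apply, neg_neg]
    obtain ⟨m, e⟩ := ha.2 h hh (-vg) vh hvg lh
    refine ⟨-m, ?_⟩
    push_cast
    rw [e, ← Finset.sum_neg_distrib]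
    refine Finset.sum_congr rfl fun i _ => ?_
    rw [← Finset.sum_neg_distrib]
    refine Finset.sum_congr rfl fun j _ => ?_
    simp only [Pi.neg_apply]
    ring

lemma dual_le {n : ℕ} (A : Matrix (Fin n) (Fin n) ℤ) (H : AddSubgroup (Fin n → QZ))
    (hH : H ≤ GA A) : dual A H hH ≤ GA Aᵀ := fun _ hg => hg.1

lemma SLA_le {n : ℕ} (A : Matrix (Fin n) (Fin n) ℤ) : SLA A ≤ GA A := fun _ hg => hg.1


lemma zsmul_qz (k : ℤ) (q : ℚ) : k • qz q = qz (k * q) := by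
  rw [← map_zsmul qz, zsmul_eq_mul]

lemma qz_one' : qz 1 = 0 := (qz_eq_zero_iff _).2 ⟨1, by norm_num⟩
lemma qz_two' : qz (3 * (2/3)) = 0 := (qz_eq_zero_iff _).2 ⟨2, by norm_num⟩
lemma qz_c1' : qz (6 * (1/3)) = 0 := (qz_eq_zero_iff _).2 ⟨2, by norm_num⟩
lemma qz_c2' : qz (3 * (1/3)) = 0 := (qz_eq_zero_iff _).2 ⟨1, by norm_num⟩
lemma qz_c3' : qz (6 * (1/6)) = 0 := (qz_eq_zero_iff _).2 ⟨1, by norm_num⟩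
lemma qz_c4' : qz 2 = 0 := (qz_eq_zero_iff _).2 ⟨2, by norm_num⟩
lemma qz_c5' : qz (6 * (2/3)) = 0 := (qz_eq_zero_iff _).2 ⟨4, by norm_num⟩
lemma qz_c6' : qz (6 * 3⁻¹) = 0 := (qz_eq_zero_iff _).2 ⟨2, by norm_num⟩

/-- The exponent matrix of `W = x³ + y³ + z⁶ + w⁶` (note `Aᵀ = A`). -/
def A12 : Matrix (Fin 4) (Fin 4) ℤ := Matrix.diagonal ![3, 3, 6, 6]

/-- The exponential grading element `j_A = (1/3, 1/3, 1/6, 1/6)`. -/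
def jvec12 : Fin 4 → QZ := ![qz (1/3), qz (1/3), qz (1/6), qz (1/6)]

/-- `G₁ = ⟨j_A, (2/3,1/3,0,0)⟩`. -/
def G1 : AddSubgroup (Fin 4 → QZ) :=
  AddSubgroup.closure {jvec12, ![qz (2/3), qz (1/3), 0, 0]}

lemma G1_le : G1 ≤ GA A12 := by
  rw [G1, AddSubgroup.closure_le]
  rintro x hx
  simp only [Set.mem_insert_iff, Set.mem_singleton_iff] at hx
  rcases hx with rfl | rfl <;>
  · show ∀ i, ∑ j, A12 i j • _ = 0
    intro i
    fin_cases i <;>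
      simp [A12, jvec12, Matrix.diagonal, Fin.sum_univ_four, zsmul_qz] <;>
      (first
        | exact qz_one'
        | exact qz_two'
        | exact qz_c1'
        | exact qz_c2'
        | exact qz_c3'
        | exact qz_c4'
        | exact qz_c5'
        | exact qz_c6')

/-- `G₂ = ⟨j_A, (1/3,1/3,1/3,0)⟩`. -/
def G2 : AddSubgroup (Fin 4 → QZ) :=
  AddSubgroup.closure {jvec12, ![qz (1/3), qz (1/3), qz (1/3), 0]}

lemma G2_le : G2 ≤ GA A12 := by
  rw [G2, AddSubgroup.closure_le]
  rintro x hx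
  simp only [Set.mem_insert_iff, Set.mem_singleton_iff] at hx
  rcases hx with rfl | rfl <;>
  · show ∀ i, ∑ j, A12 i j • _ = 0
    intro i
    fin_cases i <;>
      simp [A12, jvec12, Matrix.diagonal, Fin.sum_univ_four, zsmul_qz] <;>
      (first
        | exact qz_one'
        | exact qz_two'
        | exact qz_c1'
        | exact qz_c2'
        | exact qz_c3'
        | exact qz_c4'
        | exact qz_c5'
        | exact qz_c6')


lemma qz_eq_iff (a b : ℚ) : qz a = qz b ↔ ∃ m : ℤ, (m : ℚ) = a - b := by
  rw [← sub_eq_zero, ← map_sub, qz_eq_zero_iff]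

lemma A12_symm : A12ᵀ = A12 := by
  simp [A12]

lemma pair_expand (w v : Fin 4 → ℚ) :
    ∑ i, ∑ j, w i * (A12 i j : ℚ) * v j
      = 3 * (w 0 * v 0) + 3 * (w 1 * v 1) + 6 * (w 2 * v 2) + 6 * (w 3 * v 3) := by
  simp [A12, Matrix.diagonal, Fin.sum_univ_four]
  ring

lemma row_expand (v : Fin 4 → ℚ) (i : Fin 4) :
    ∑ j, (A12 i j : ℚ) * v j = (A12 i i : ℚ) * v i := by
  fin_cases i <;> simp [A12, Matrix.diagonal, Fin.sum_univ_four]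

lemma isLift_j : IsLift ![1/3, 1/3, 1/6, 1/6] jvec12 := by
  intro i; fin_cases i <;> simp [jvec12]

lemma isLift_g1 : IsLift ![2/3, 1/3, 0, 0] ![qz (2/3), qz (1/3), 0, 0] := by
  intro i; fin_cases i <;> simp

lemma isLift_g2 : IsLift ![1/3, 1/3, 1/3, 0] ![qz (1/3), qz (1/3), qz (1/3), 0] := by
  intro i; fin_cases i <;> simp

lemma pairing_indep4 {g h : Fin 4 → QZ} (hg : g ∈ GA A12) (hh : h ∈ GA A12)
    {vg vg' vh vh' : Fin 4 → ℚ} (lg : IsLift vg g) (lg' : IsLift vg' g)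
    (lh : IsLift vh h) (lh' : IsLift vh' h) :
    ∃ m : ℤ, (m : ℚ) = (∑ i, ∑ j, vg i * (A12 i j : ℚ) * vh j)
      - ∑ i, ∑ j, vg' i * (A12 i j : ℚ) * vh' j := by
  choose c hc using fun i => row_int hh lh i
  choose c' hc' using fun i => row_int hg lg' i
  have hd : ∀ i, ∃ m : ℤ, (m : ℚ) = vg i - vg' i := by
    intro i; rw [← qz_eq_iff, lg i, lg' i]
  have he : ∀ i, ∃ m : ℤ, (m : ℚ) = vh i - vh' i := by
    intro i; rw [← qz_eq_iff, lh i, lh' i]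
  choose dm hdm using hd
  choose em hem using he
  refine ⟨(∑ i, dm i * c i) + ∑ j, em j * c' j, ?_⟩
  have hc2 : ∀ i, (c i : ℚ) = (A12 i i : ℚ) * vh i := fun i => (hc i).trans (row_expand vh i)
  have hc2' : ∀ i, (c' i : ℚ) = (A12 i i : ℚ) * vg' i := fun i => (hc' i).trans (row_expand vg' i)
  push_cast
  rw [pair_expand, pair_expand]
  simp only [Fin.sum_univ_four, hdm, hem, hc2, hc2']
  norm_num [A12, Matrix.diagonal]
  simp only [Matrix.cons_val]
  ring

def Tpair (w : Fin 4 → ℚ) : AddSubgroup (Fin 4 → QZ) where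
  carrier := {h | ∃ vh : Fin 4 → ℚ, IsLift vh h ∧
    ∃ m : ℤ, (m : ℚ) = ∑ i, ∑ j, w i * (A12 i j : ℚ) * vh j}
  zero_mem' := ⟨0, fun i => map_zero qz, ⟨0, by simp⟩⟩
  add_mem' := by
    rintro a b ⟨va, la, ma, hma⟩ ⟨vb, lb, mb, hmb⟩
    refine ⟨va + vb, fun i => by rw [Pi.add_apply, map_add, la i, lb i]; rfl, ma + mb, ?_⟩
    push_cast
    rw [hma, hmb, pair_expand, pair_expand, pair_expand]
    simp only [Pi.add_apply]; ring
  neg_mem' := by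
    rintro a ⟨va, la, ma, hma⟩
    refine ⟨-va, fun i => by rw [Pi.neg_apply, map_neg, la i]; rfl, -ma, ?_⟩
    push_cast
    rw [hma, pair_expand, pair_expand]
    simp only [Pi.neg_apply]; ring

lemma jvec12_mem_G1 : jvec12 ∈ G1 := AddSubgroup.subset_closure (Set.mem_insert _ _)
lemma g1v_mem_G1 : ![qz (2/3), qz (1/3), 0, 0] ∈ G1 :=
  AddSubgroup.subset_closure (Set.mem_insert_of_mem _ rfl)
lemma jvec12_mem_G2 : jvec12 ∈ G2 := AddSubgroup.subset_closure (Set.mem_insert _ _)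
lemma g2v_mem_G2 : ![qz (1/3), qz (1/3), qz (1/3), 0] ∈ G2 :=
  AddSubgroup.subset_closure (Set.mem_insert_of_mem _ rfl)

lemma G1_le_Tj : G1 ≤ Tpair ![1/3, 1/3, 1/6, 1/6] := by
  rw [G1, AddSubgroup.closure_le]
  rintro x hx
  simp only [Set.mem_insert_iff, Set.mem_singleton_iff] at hx
  rcases hx with rfl | rfl
  · exact ⟨![1/3, 1/3, 1/6, 1/6], isLift_j, 1, by rw [pair_expand]; simp only [Matrix.cons_val]; norm_num⟩
  · exact ⟨![2/3, 1/3, 0, 0], isLift_g1, 1, by rw [pair_expand]; simp only [Matrix.cons_val]; norm_num⟩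

lemma G1_le_Tg2 : G1 ≤ Tpair ![1/3, 1/3, 1/3, 0] := by
  rw [G1, AddSubgroup.closure_le]
  rintro x hx
  simp only [Set.mem_insert_iff, Set.mem_singleton_iff] at hx
  rcases hx with rfl | rfl
  · exact ⟨![1/3, 1/3, 1/6, 1/6], isLift_j, 1, by rw [pair_expand]; simp only [Matrix.cons_val]; norm_num⟩
  · exact ⟨![2/3, 1/3, 0, 0], isLift_g1, 1, by rw [pair_expand]; simp only [Matrix.cons_val]; norm_num⟩

lemma G2_le_Tj : G2 ≤ Tpair ![1/3, 1/3, 1/6, 1/6] := by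
  rw [G2, AddSubgroup.closure_le]
  rintro x hx
  simp only [Set.mem_insert_iff, Set.mem_singleton_iff] at hx
  rcases hx with rfl | rfl
  · exact ⟨![1/3, 1/3, 1/6, 1/6], isLift_j, 1, by rw [pair_expand]; simp only [Matrix.cons_val]; norm_num⟩
  · exact ⟨![1/3, 1/3, 1/3, 0], isLift_g2, 1, by rw [pair_expand]; simp only [Matrix.cons_val]; norm_num⟩

lemma G2_le_Tg1 : G2 ≤ Tpair ![2/3, 1/3, 0, 0] := by
  rw [G2, AddSubgroup.closure_le]
  rintro x hx
  simp only [Set.mem_insert_iff, Set.mem_singleton_iff] at hx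
  rcases hx with rfl | rfl
  · exact ⟨![1/3, 1/3, 1/6, 1/6], isLift_j, 1, by rw [pair_expand]; simp only [Matrix.cons_val]; norm_num⟩
  · exact ⟨![1/3, 1/3, 1/3, 0], isLift_g2, 1, by rw [pair_expand]; simp only [Matrix.cons_val]; norm_num⟩

lemma mem_dual_of {H : AddSubgroup (Fin 4 → QZ)} {hH : H ≤ GA A12}
    {g : Fin 4 → QZ} {w : Fin 4 → ℚ}
    (hgGA : g ∈ GA A12) (hw : IsLift w g) (hT : H ≤ Tpair w) :
    g ∈ dual A12 H hH := by
  refine ⟨by rw [A12_symm]; exact hgGA, ?_⟩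
  intro h hh vg vh lg lh
  obtain ⟨vh0, lh0, m, hm⟩ := hT hh
  obtain ⟨m', hm'⟩ := pairing_indep4 hgGA (hH hh) lg hw lh lh0
  exact ⟨m + m', by push_cast; rw [hm', ← hm]; ring⟩

lemma dual_G1_le : dual A12 G1 G1_le ≤ G2 := by
  intro g hg
  obtain ⟨hGA, hP⟩ := hg
  have hGA' : g ∈ GA A12 := by rw [← A12_symm]; exact hGA
  obtain ⟨v, hv⟩ := exists_lift g
  obtain ⟨m0, hm0⟩ := row_int hGA' hv 0
  obtain ⟨m1, hm1⟩ := row_int hGA' hv 1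
  obtain ⟨m2, hm2⟩ := row_int hGA' hv 2
  obtain ⟨m3, hm3⟩ := row_int hGA' hv 3
  rw [row_expand] at hm0 hm1 hm2 hm3
  norm_num [A12, Matrix.diagonal] at hm0 hm1 hm2 hm3
  simp only [Matrix.cons_val, Int.cast_ofNat] at hm2 hm3
  obtain ⟨k, hk⟩ := hP jvec12 jvec12_mem_G1 v ![1/3, 1/3, 1/6, 1/6] hv isLift_j
  obtain ⟨k', hk'⟩ := hP _ g1v_mem_G1 v ![2/3, 1/3, 0, 0] hv isLift_g1
  rw [pair_expand] at hk hk'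
  simp only [Matrix.cons_val] at hk hk'
  norm_num at hk hk'
  have key : g = m3 • jvec12 + (m0 - m3) • ![qz (1/3), qz (1/3), qz (1/3), 0] := by
    funext i
    rw [← hv i]
    fin_cases i <;>
      simp [jvec12, zsmul_qz, ← map_add, qz_eq_iff]
    · exact ⟨0, by push_cast; linarith⟩
    · exact ⟨k' - m0, by push_cast; linarith⟩
    · exact ⟨k - k', by push_cast; linarith⟩
    · exact ⟨0, by push_cast; linarith⟩
  rw [key]
  exact G2.add_mem (G2.zsmul_mem jvec12_mem_G2 _) (G2.zsmul_mem g2v_mem_G2 _)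

lemma dual_G2_le : dual A12 G2 G2_le ≤ G1 := by
  intro g hg
  obtain ⟨hGA, hP⟩ := hg
  have hGA' : g ∈ GA A12 := by rw [← A12_symm]; exact hGA
  obtain ⟨v, hv⟩ := exists_lift g
  obtain ⟨m0, hm0⟩ := row_int hGA' hv 0
  obtain ⟨m1, hm1⟩ := row_int hGA' hv 1
  obtain ⟨m2, hm2⟩ := row_int hGA' hv 2
  obtain ⟨m3, hm3⟩ := row_int hGA' hv 3
  rw [row_expand] at hm0 hm1 hm2 hm3
  norm_num [A12, Matrix.diagonal] at hm0 hm1 hm2 hm3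
  simp only [Matrix.cons_val, Int.cast_ofNat] at hm2 hm3
  obtain ⟨k, hk⟩ := hP jvec12 jvec12_mem_G2 v ![1/3, 1/3, 1/6, 1/6] hv isLift_j
  obtain ⟨k', hk'⟩ := hP _ g2v_mem_G2 v ![1/3, 1/3, 1/3, 0] hv isLift_g2
  rw [pair_expand] at hk hk'
  simp only [Matrix.cons_val] at hk hk'
  norm_num at hk hk'
  have key : g = m2 • jvec12 + (m1 - m2) • ![qz (2/3), qz (1/3), 0, 0] := by
    funext i
    rw [← hv i]
    fin_cases i <;>
      simp [jvec12, zsmul_qz, ← map_add, qz_eq_iff]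
    · exact ⟨k' - m1, by push_cast; linarith⟩
    · exact ⟨0, by push_cast; linarith⟩
    · exact ⟨0, by push_cast; linarith⟩
    · exact ⟨k - k', by push_cast; linarith⟩
  rw [key]
  exact G1.add_mem (G1.zsmul_mem jvec12_mem_G1 _) (G1.zsmul_mem g1v_mem_G1 _)

lemma G2_le_dual : G2 ≤ dual A12 G1 G1_le := by
  rw [G2, AddSubgroup.closure_le]
  rintro x hx
  simp only [Set.mem_insert_iff, Set.mem_singleton_iff] at hx
  rcases hx with rfl | rfl
  · exact mem_dual_of (G2_le jvec12_mem_G2) isLift_j G1_le_Tj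
  · exact mem_dual_of (G2_le g2v_mem_G2) isLift_g2 G1_le_Tg2

lemma G1_le_dual : G1 ≤ dual A12 G2 G2_le := by
  rw [G1, AddSubgroup.closure_le]
  rintro x hx
  simp only [Set.mem_insert_iff, Set.mem_singleton_iff] at hx
  rcases hx with rfl | rfl
  · exact mem_dual_of (G1_le jvec12_mem_G1) isLift_j G2_le_Tj
  · exact mem_dual_of (G1_le g1v_mem_G1) isLift_g1 G2_le_Tg1

/-- for `A = diag(3,3,6,6)` (so `Aᵀ = A`), the subgroups
`G₁ = ⟨j_A, (2/3,1/3,0,0)⟩` and `G₂ = ⟨j_A, (1/3,1/3,1/3,0)⟩` satisfy `G₁^T = G₂` and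
`G₂^T = G₁`. -/
theorem stmt12 : dual A12 G1 G1_le = G2 ∧ dual A12 G2 G2_le = G1 := by
  exact ⟨le_antisymm dual_G1_le G2_le_dual, le_antisymm dual_G2_le G1_le_dual⟩

end
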